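/- Let H = (−1,−3/Q) be the quaternion algebra with i² = −1, j² = −3, k = ij, and let O be the maximal order with Z-basis {1, i, λ, μ} where λ = (i+j)/2 and μ = (1+k)/2. A quaternion α = a₀ + a₁i + a₂j + a₃k ∈ H belongs to the set {α ∈ O : α ≡ 1 mod 2O, Nm(α) = p} if and only if: (i) all aᵢ are integers, (ii) a₀² + a₁² + 3a₂² + 3a₃² = p, and (iii) a₀ + a₃ ≡ 1 (mod 2) and a₁ + a₂ ≡ 0 (mod 2). -/

import Mathlib

open scoped Quaternion

/-- The element `x·1 + y·i + z·λ + t·μ` of `(−1,−3/ℚ)`, where `λ = (i+j)/2` and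
`μ = (1+k)/2`, expressed in the coordinates `(re, imI, imJ, imK)`. -/
noncomputable def o3Elt (x y z t : ℤ) : ℍ[ℚ,-1,-3] :=
  ⟨(x : ℚ) + (t : ℚ)/2, (y : ℚ) + (z : ℚ)/2, (z : ℚ)/2, (t : ℚ)/2⟩

/-- The maximal order of `(−1,−3/ℚ)` with `ℤ`-basis `{1, i, (i+j)/2, (1+k)/2}`. -/
def O3 : Set ℍ[ℚ,-1,-3] := {w | ∃ x y z t : ℤ, w = o3Elt x y z t}

/-- A quaternion `α = a₀ + a₁i + a₂j + a₃k` of `(−1,−3/ℚ)` lies in the set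
`{α ∈ O : α ≡ 1 mod 2O, Nm(α) = p}` if and only if all the `aᵢ` are integers,
`a₀² + a₁² + 3a₂² + 3a₃² = p`, `a₀ + a₃ ≡ 1 (mod 2)` and `a₁ + a₂ ≡ 0 (mod 2)`. -/
theorem stmt_5 (p : ℕ) (hp : p.Prime) (a0 a1 a2 a3 : ℚ) (α : ℍ[ℚ,-1,-3])
    (hα : α = ⟨a0, a1, a2, a3⟩) :
    (α ∈ O3 ∧ (∃ w ∈ O3, α - 1 = 2 * w) ∧ (α * star α).re = (p : ℚ)) ↔
      ∃ b0 b1 b2 b3 : ℤ, a0 = (b0 : ℚ) ∧ a1 = (b1 : ℚ) ∧ a2 = (b2 : ℚ) ∧ a3 = (b3 : ℚ) ∧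
        b0 ^ 2 + b1 ^ 2 + 3 * b2 ^ 2 + 3 * b3 ^ 2 = (p : ℤ) ∧
        b0 + b3 ≡ 1 [ZMOD 2] ∧ b1 + b2 ≡ 0 [ZMOD 2] := by
  subst hα
  constructor
  · rintro ⟨-, ⟨w, ⟨x, y, z, t, rfl⟩, hw⟩, hnorm⟩
    rw [two_mul, QuaternionAlgebra.ext_iff] at hw
    simp only [o3Elt, QuaternionAlgebra.re_sub, QuaternionAlgebra.imI_sub,
      QuaternionAlgebra.imJ_sub, QuaternionAlgebra.imK_sub, QuaternionAlgebra.re_one,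
      QuaternionAlgebra.imI_one, QuaternionAlgebra.imJ_one, QuaternionAlgebra.imK_one,
      QuaternionAlgebra.re_add, QuaternionAlgebra.imI_add, QuaternionAlgebra.imJ_add,
      QuaternionAlgebra.imK_add] at hw
    obtain ⟨h0, h1, h2, h3⟩ := hw
    simp only [QuaternionAlgebra.re_mul, QuaternionAlgebra.re_star,
      QuaternionAlgebra.imI_star, QuaternionAlgebra.imJ_star,
      QuaternionAlgebra.imK_star] at hnorm
    have ha0 : a0 = 2*(x:ℚ) + t + 1 := by linarith
    have ha1 : a1 = 2*(y:ℚ) + z := by linarith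
    have ha2 : a2 = (z:ℚ) := by linarith
    have ha3 : a3 = (t:ℚ) := by linarith
    rw [ha0, ha1, ha2, ha3] at hnorm
    refine ⟨2*x + t + 1, 2*y + z, z, t, by push_cast; linarith, by push_cast; linarith,
      by push_cast; linarith, by push_cast; linarith, ?_, ?_, ?_⟩
    · exact_mod_cast (by push_cast; linear_combination hnorm :
        (((2*x + t + 1)^2 + (2*y + z)^2 + 3*z^2 + 3*t^2 : ℤ) : ℚ) = ((p : ℤ) : ℚ))
    · unfold Int.ModEq; omega
    · unfold Int.ModEq; omega
  · rintro ⟨b0, b1, b2, b3, rfl, rfl, rfl, rfl, hn, h03, h12⟩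
    unfold Int.ModEq at h03 h12
    obtain ⟨u, hu⟩ : ∃ u : ℤ, b0 - 1 - b3 = 2 * u := ⟨(b0 - 1 - b3)/2, by omega⟩
    obtain ⟨v, hv⟩ : ∃ v : ℤ, b1 - b2 = 2 * v := ⟨(b1 - b2)/2, by omega⟩
    have hu' : (b0 : ℚ) - 1 - b3 = 2 * u := by exact_mod_cast congrArg (Int.cast : ℤ → ℚ) hu
    have hv' : (b1 : ℚ) - b2 = 2 * v := by exact_mod_cast congrArg (Int.cast : ℤ → ℚ) hv
    refine ⟨⟨b0 - b3, b1 - b2, 2*b2, 2*b3, ?_⟩, ⟨o3Elt u v b2 b3, ⟨u, v, b2, b3, rfl⟩, ?_⟩, ?_⟩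
    · ext <;> simp [o3Elt] <;> push_cast <;> ring
    · rw [two_mul]
      ext <;> simp [o3Elt] <;> linarith
    · simp only [QuaternionAlgebra.re_mul, QuaternionAlgebra.re_star,
        QuaternionAlgebra.imI_star, QuaternionAlgebra.imJ_star, QuaternionAlgebra.imK_star]
      have := congrArg (Int.cast : ℤ → ℚ) hn
      push_cast at this ⊢
      linarith
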